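/- For the simple quotient module V = A₀ / F·v_{0,0} of the S(l₁,l₂,l₃;0,Γ)-module A₀, the set of generalized weights of V is Γ, the weight space V_0^{(0)} has dimension l₁+l₂ (spanned by the images of v_{0,1_[p]} for p ∈ {1,…,l₁+l₂}), and dim V_β^{(0)} = 1 for every β ∈ Γ∖{0}. -/

import Mathlib

set_option linter.unusedSectionVars false


open scoped BigOperators

namespace SDF

variable (F : Type) [Field F] [IsAlgClosed F] [CharZero F]
variable (l₁ l₂ l₃ : ℕ) (Γ : AddSubgroup (Fin (l₂ + l₃) → F))

/-- The semigroup algebra `A(l₁,l₂,l₃;Γ) = F[Γ × ℕ^{l₁+l₂}]`,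
with basis `x^α t^i` for `α ∈ Γ`, `i ∈ ℕ^{l₁+l₂}`. -/
abbrev Alg : Type := AddMonoidAlgebra F (↥Γ × (Fin (l₁ + l₂) →₀ ℕ))

/-- The basis monomial `x^α t^i`. -/
noncomputable def mono (α : Γ) (i : Fin (l₁ + l₂) →₀ ℕ) : Alg F l₁ l₂ l₃ Γ :=
  AddMonoidAlgebra.single (α, i) 1

/-- The `p`-th coordinate of `α ∈ Γ ⊆ F^{l₂+l₃}`, with the convention `α_p = 0` for `p ≤ l₁`. -/
def acoord (p : Fin (l₁ + l₂ + l₃)) (α : Γ) : F :=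
  if h : l₁ ≤ (p : ℕ) then (α : Fin (l₂ + l₃) → F) ⟨(p : ℕ) - l₁, by have := p.isLt; omega⟩
  else 0

/-- The `p`-th coordinate of a general `μ ∈ F^{l₂+l₃}`, with the convention `μ_p = 0` for `p ≤ l₁`. -/
def fcoord (p : Fin (l₁ + l₂ + l₃)) (μ : Fin (l₂ + l₃) → F) : F :=
  if h : l₁ ≤ (p : ℕ) then μ ⟨(p : ℕ) - l₁, by have := p.isLt; omega⟩ else 0

/-- The `p`-th component of `i ∈ ℕ^{l₁+l₂}`, with the convention `i_p = 0` for `p > l₁+l₂`. -/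
def icoord (p : Fin (l₁ + l₂ + l₃)) (i : Fin (l₁ + l₂) →₀ ℕ) : ℕ :=
  if h : (p : ℕ) < l₁ + l₂ then i ⟨(p : ℕ), h⟩ else 0

/-- `i - 1_[p]` (truncated subtraction; only used with coefficient `i_p`). -/
noncomputable def lower (p : Fin (l₁ + l₂ + l₃)) (i : Fin (l₁ + l₂) →₀ ℕ) : Fin (l₁ + l₂) →₀ ℕ :=
  if h : (p : ℕ) < l₁ + l₂ then i - Finsupp.single ⟨(p : ℕ), h⟩ 1 else i

/-- The derivation `∂_p` of `A(l₁,l₂,l₃;Γ)`: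
`∂_p(x^α t^i) = α_p x^α t^i + i_p x^α t^{i - 1_[p]}`. -/
noncomputable def pd (p : Fin (l₁ + l₂ + l₃)) :
    Alg F l₁ l₂ l₃ Γ →ₗ[F] Alg F l₁ l₂ l₃ Γ :=
  (Finsupp.lsum F fun g : ↥Γ × (Fin (l₁ + l₂) →₀ ℕ) =>
    LinearMap.toSpanSingleton F (Alg F l₁ l₂ l₃ Γ)
      (acoord F l₁ l₂ l₃ Γ p g.1 • mono F l₁ l₂ l₃ Γ g.1 g.2
        + (icoord l₁ l₂ l₃ p g.2 : F) • mono F l₁ l₂ l₃ Γ g.1 (lower l₁ l₂ l₃ p g.2)))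
      ∘ₗ (AddMonoidAlgebra.coeffLinearEquiv F).toLinearMap

/-- The Witt algebra `W(l₁,l₂,l₃;Γ) = A·D`; the tuple `u : Wt` represents `Σ_p u_p ∂_p`. -/
abbrev Wt : Type := Fin (l₁ + l₂ + l₃) → Alg F l₁ l₂ l₃ Γ

/-- The Lie bracket of `W(l₁,l₂,l₃;Γ)`:
`[Σ_p u_p ∂_p, Σ_q v_q ∂_q] = Σ_{p,q} (u_p ∂_p(v_q) - v_p ∂_p(u_q)) ∂_q`. -/
noncomputable def wbr (u v : Wt F l₁ l₂ l₃ Γ) : Wt F l₁ l₂ l₃ Γ :=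
  fun r => ∑ p, (u p * pd F l₁ l₂ l₃ Γ p (v r) - v p * pd F l₁ l₂ l₃ Γ p (u r))

/-- `D_{p,q}(u) = ∂_p(u) ∂_q - ∂_q(u) ∂_p`. -/
noncomputable def Dpq (p q : Fin (l₁ + l₂ + l₃)) (u : Alg F l₁ l₂ l₃ Γ) :
    Wt F l₁ l₂ l₃ Γ :=
  Pi.single q (pd F l₁ l₂ l₃ Γ p u) - Pi.single p (pd F l₁ l₂ l₃ Γ q u)

/-- The divergence-free algebra `S(l₁,l₂,l₃;0,Γ) = Span{D_{p,q}(u)}`. -/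
noncomputable def Ssub : Submodule F (Wt F l₁ l₂ l₃ Γ) :=
  Submodule.span F {w | ∃ p q u, w = Dpq F l₁ l₂ l₃ Γ p q u}

/-- `Γ` is nondegenerate: it contains an `F`-basis of `F^{l₂+l₃}`, i.e. it spans. -/
def Nondeg : Prop := Submodule.span F (Γ : Set (Fin (l₂ + l₃) → F)) = ⊤

/-- The divergence `div(Σ_p u_p ∂_p) = Σ_p ∂_p(u_p)`. -/
noncomputable def dvg (w : Wt F l₁ l₂ l₃ Γ) : Alg F l₁ l₂ l₃ Γ :=
  ∑ p, pd F l₁ l₂ l₃ Γ p (w p)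

/-- The action of `Σ_p u_p ∂_p ∈ W` on `A_μ` (the space `A` with basis `v_{β,i}` the monomials):
`(u ∂_p) . v = u * (∂_p + μ_p) v`. On basis elements this gives exactly the defining formulas
of the module `A_μ`. -/
noncomputable def actW (μ : Fin (l₂ + l₃) → F) (X : Wt F l₁ l₂ l₃ Γ) :
    Alg F l₁ l₂ l₃ Γ →ₗ[F] Alg F l₁ l₂ l₃ Γ :=
  ∑ p, (LinearMap.mulLeft F (X p)).comp
    (pd F l₁ l₂ l₃ Γ p + fcoord F l₁ l₂ l₃ p μ • LinearMap.id)

/-- The element `Σ_p a_p ∂_p` of `D ⊆ W`. -/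
noncomputable def wD (a : Fin (l₁ + l₂ + l₃) → F) : Wt F l₁ l₂ l₃ Γ :=
  fun p => algebraMap F (Alg F l₁ l₂ l₃ Γ) (a p)

/-- The element `∂_p ∈ W`. -/
noncomputable def wdelta (p : Fin (l₁ + l₂ + l₃)) : Wt F l₁ l₂ l₃ Γ :=
  Pi.single p 1

/-- `β(∂) = Σ_{p>l₁} a_p β_p` for `∂ = Σ_p a_p ∂_p`. -/
def beval (β : Fin (l₂ + l₃) → F) (a : Fin (l₁ + l₂ + l₃) → F) : F :=
  ∑ p, a p * fcoord F l₁ l₂ l₃ p β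


/-- The line `F·v_{0,0}` in `A₀`, a trivial submodule. -/
noncomputable def L0 : Submodule F (Alg F l₁ l₂ l₃ Γ) :=
  Submodule.span F {mono F l₁ l₂ l₃ Γ 0 0}

set_option linter.unusedSectionVars false
set_option maxHeartbeats 1000000

noncomputable instance algCoeFun :
    CoeFun (Alg F l₁ l₂ l₃ Γ) (fun _ => ↥Γ × (Fin (l₁ + l₂) →₀ ℕ) → F) :=
  ⟨fun v => ⇑v.coeff⟩

section Lemmas
variable {F l₁ l₂ l₃ Γ}


lemma mono_def (α : Γ) (i : Fin (l₁ + l₂) →₀ ℕ) :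
    mono F l₁ l₂ l₃ Γ α i = AddMonoidAlgebra.single (α, i) (1 : F) := rfl

lemma pd_single (p : Fin (l₁ + l₂ + l₃)) (α : Γ) (i : Fin (l₁ + l₂) →₀ ℕ) (c : F) :
    pd F l₁ l₂ l₃ Γ p (AddMonoidAlgebra.single (α, i) c)
      = c • (acoord F l₁ l₂ l₃ Γ p α • mono F l₁ l₂ l₃ Γ α i
          + (icoord l₁ l₂ l₃ p i : F) • mono F l₁ l₂ l₃ Γ α (lower l₁ l₂ l₃ p i)) := by
  have h := Finsupp.lsum_single (R := F) (S := F)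
    (f := fun g : ↥Γ × (Fin (l₁ + l₂) →₀ ℕ) =>
      LinearMap.toSpanSingleton F (Alg F l₁ l₂ l₃ Γ)
        (acoord F l₁ l₂ l₃ Γ p g.1 • mono F l₁ l₂ l₃ Γ g.1 g.2
          + (icoord l₁ l₂ l₃ p g.2 : F) • mono F l₁ l₂ l₃ Γ g.1 (lower l₁ l₂ l₃ p g.2)))
    (i := (α, i)) (m := c)
  unfold pd
  exact h.trans (by rw [LinearMap.toSpanSingleton_apply])


section helpers
variable {n : ℕ}
lemma tsub_single_eq_iff {i j : Fin n →₀ ℕ} {P : Fin n} (h : 1 ≤ i P) :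
    i - Finsupp.single P 1 = j ↔ i = j + Finsupp.single P 1 := by
  rw [tsub_eq_iff_eq_add_of_le (Finsupp.single_le_iff.2 h)]

lemma sub_single_self (i : Fin n →₀ ℕ) (P : Fin n) (h : i P = 0) :
    i - Finsupp.single P 1 = i := by
  ext q
  rw [Finsupp.tsub_apply, Finsupp.single_apply]
  by_cases hq : P = q
  · subst hq; simp [h]
  · simp [hq]

lemma add_single_apply (j : Fin n →₀ ℕ) (P : Fin n) :
    ((j + Finsupp.single P 1 : Fin n →₀ ℕ)) P = j P + 1 := by
  rw [Finsupp.add_apply, Finsupp.single_apply]; simp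
end helpers

lemma icoord_pos {p : Fin (l₁ + l₂ + l₃)} (h : (p : ℕ) < l₁ + l₂) (i : Fin (l₁ + l₂) →₀ ℕ) :
    icoord l₁ l₂ l₃ p i = i ⟨(p : ℕ), h⟩ := dif_pos h

lemma icoord_neg {p : Fin (l₁ + l₂ + l₃)} (h : ¬ (p : ℕ) < l₁ + l₂) (i : Fin (l₁ + l₂) →₀ ℕ) :
    icoord l₁ l₂ l₃ p i = 0 := dif_neg h

lemma lower_pos {p : Fin (l₁ + l₂ + l₃)} (h : (p : ℕ) < l₁ + l₂) (i : Fin (l₁ + l₂) →₀ ℕ) :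
    lower l₁ l₂ l₃ p i = i - Finsupp.single ⟨(p : ℕ), h⟩ 1 := dif_pos h

lemma lower_neg {p : Fin (l₁ + l₂ + l₃)} (h : ¬ (p : ℕ) < l₁ + l₂) (i : Fin (l₁ + l₂) →₀ ℕ) :
    lower l₁ l₂ l₃ p i = i := dif_neg h

lemma alg_add_apply (v w : Alg F l₁ l₂ l₃ Γ) (g : ↥Γ × (Fin (l₁ + l₂) →₀ ℕ)) :
    (v + w) g = v g + w g := rfl

lemma alg_smul_apply (c : F) (v : Alg F l₁ l₂ l₃ Γ) (g : ↥Γ × (Fin (l₁ + l₂) →₀ ℕ)) :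
    (c • v) g = c * v g := rfl

lemma alg_single_apply {g g' : ↥Γ × (Fin (l₁ + l₂) →₀ ℕ)} {c : F}
    [Decidable (g = g')] :
    (AddMonoidAlgebra.single g c : Alg F l₁ l₂ l₃ Γ) g' = if g = g' then c else 0 := by
  classical exact Finsupp.single_apply

lemma alg_zero_apply (g : ↥Γ × (Fin (l₁ + l₂) →₀ ℕ)) : (0 : Alg F l₁ l₂ l₃ Γ) g = 0 := rfl

lemma pd_apply (p : Fin (l₁ + l₂ + l₃)) (u : Alg F l₁ l₂ l₃ Γ) (α : Γ) (j : Fin (l₁ + l₂) →₀ ℕ) :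
    pd F l₁ l₂ l₃ Γ p u (α, j)
      = acoord F l₁ l₂ l₃ Γ p α * u (α, j)
        + (if h : (p : ℕ) < l₁ + l₂
            then ((j ⟨(p : ℕ), h⟩ + 1 : ℕ) : F) *
              u (α, j + Finsupp.single ⟨(p : ℕ), h⟩ 1)
            else 0) := by
  classical
  induction u using AddMonoidAlgebra.induction_linear with
  | zero => simp
  | add f g hf hg =>
      rw [map_add, alg_add_apply, hf, hg, alg_add_apply]
      by_cases h : (p : ℕ) < l₁ + l₂
      · rw [dif_pos h, dif_pos h, dif_pos h, alg_add_apply]; ring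
      · rw [dif_neg h, dif_neg h, dif_neg h]; ring
  | single g c =>
      obtain ⟨β, i⟩ := g
      rw [pd_single]
      by_cases h : (p : ℕ) < l₁ + l₂
      · set P : Fin (l₁ + l₂) := ⟨(p : ℕ), h⟩ with hP
        simp only [icoord_pos h, lower_pos h, dif_pos h, mono_def, alg_smul_apply,
          alg_add_apply, alg_single_apply, Prod.mk.injEq, ← hP]
        by_cases hβ : β = α
        · subst hβ
          simp only [eq_self_iff_true, true_and]
          by_cases hiP : i P = 0
          · have hni : ¬ i = j + Finsupp.single P 1 := by
              intro hh; rw [hh, add_single_apply] at hiP; omega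
            rw [sub_single_self i P hiP]
            by_cases hij : i = j
            · subst hij; simp only [if_pos rfl, if_neg hni, hiP]; push_cast; ring
            · simp only [if_neg hij, if_neg hni]; ring
          · have hle : 1 ≤ i P := Nat.one_le_iff_ne_zero.2 hiP
            by_cases hIJ : i = j + Finsupp.single P 1
            · have h2 : i - Finsupp.single P 1 = j := (tsub_single_eq_iff hle).2 hIJ
              have hij : ¬ i = j := by
                intro hh
                rw [hh] at hIJ
                have := congrArg (fun f : Fin (l₁ + l₂) →₀ ℕ => f P) hIJ
                simp only [add_single_apply] at this
                omega
              have hiPv : i P = j P + 1 := by rw [hIJ, add_single_apply]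
              simp only [if_neg hij, if_pos h2, if_pos hIJ, hiPv]
              push_cast
              ring
            · have h2 : ¬ i - Finsupp.single P 1 = j :=
                fun hh => hIJ ((tsub_single_eq_iff hle).1 hh)
              by_cases hij : i = j
              · subst hij; simp only [if_pos rfl, if_neg h2, if_neg hIJ, if_true]; ring
              · simp only [if_neg hij, if_neg h2, if_neg hIJ]; ring
        · simp only [hβ, false_and, if_false]; ring
      · simp only [icoord_neg h, lower_neg h, dif_neg h, mono_def, alg_smul_apply,
          alg_add_apply, alg_single_apply, Prod.mk.injEq]
        by_cases hβ : β = α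
        · subst hβ
          simp only [eq_self_iff_true, true_and]
          by_cases hij : i = j
          · subst hij; simp only [if_pos rfl]; push_cast; ring
          · simp only [if_neg hij]; ring
        · simp only [hβ, false_and, if_false]; ring


lemma alg_sub_apply (v w : Alg F l₁ l₂ l₃ Γ) (g : ↥Γ × (Fin (l₁ + l₂) →₀ ℕ)) :
    (v - w) g = v g - w g := rfl

noncomputable def pdE (p : Fin (l₁ + l₂ + l₃)) (c : F) : Module.End F (Alg F l₁ l₂ l₃ Γ) :=
  pd F l₁ l₂ l₃ Γ p - c • LinearMap.id

lemma pdE_apply (p : Fin (l₁ + l₂ + l₃)) (c : F) (u : Alg F l₁ l₂ l₃ Γ) :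
    pdE p c u = pd F l₁ l₂ l₃ Γ p u - c • u := rfl

/-- total degree -/
def deg (i : Fin (l₁ + l₂) →₀ ℕ) : ℕ := i.sum fun _ n => n

lemma deg_zero : deg (0 : Fin (l₁ + l₂) →₀ ℕ) = 0 := by simp [deg]

lemma deg_add (i j : Fin (l₁ + l₂) →₀ ℕ) : deg (i + j) = deg i + deg j :=
  Finsupp.sum_add_index' (fun _ => rfl) (fun _ _ _ => rfl)

lemma deg_single (P : Fin (l₁ + l₂)) : deg (Finsupp.single P 1) = 1 :=
  Finsupp.sum_single_index rfl

lemma deg_eq_zero {i : Fin (l₁ + l₂) →₀ ℕ} (h : deg i = 0) : i = 0 := by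
  ext q
  by_cases hq : q ∈ i.support
  · exact absurd h (by
      have : i q ≤ deg i := Finset.single_le_sum (f := fun a => i a) (fun _ _ => Nat.zero_le _) hq
      have := Finsupp.mem_support_iff.1 hq
      omega)
  · simpa using Finsupp.notMem_support_iff.1 hq

lemma deg_pos_exists {i : Fin (l₁ + l₂) →₀ ℕ} (h : i ≠ 0) : ∃ P, 1 ≤ i P := by
  by_contra hc
  push_neg at hc
  exact h (by ext q; have := hc q; simp only [Finsupp.coe_zero, Pi.zero_apply]; omega)

lemma deg_eq_one {i : Fin (l₁ + l₂) →₀ ℕ} (h : deg i = 1) : ∃ q, i = Finsupp.single q 1 := by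
  have hne : i ≠ 0 := fun hh => by rw [hh] at h; simp [deg] at h
  obtain ⟨q, hq⟩ := deg_pos_exists hne
  have hqs : q ∈ i.support := Finsupp.mem_support_iff.2 (by omega)
  have hsum : ∑ a ∈ i.support, i a = 1 := h
  have hle : i q ≤ 1 := by
    have : i q ≤ ∑ a ∈ i.support, i a :=
      Finset.single_le_sum (f := fun a => i a) (fun _ _ => Nat.zero_le _) hqs
    omega
  have hiq : i q = 1 := by omega
  refine ⟨q, ?_⟩
  ext r
  rw [Finsupp.single_apply]
  by_cases hr : q = r
  · subst hr; simpa using hiq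
  · rw [if_neg hr]
    by_cases hrs : r ∈ i.support
    · have h1 : ∑ a ∈ i.support, i a = i q + ∑ a ∈ i.support.erase q, i a :=
        (Finset.add_sum_erase _ _ hqs).symm
      have h2 : i r ≤ ∑ a ∈ i.support.erase q, i a :=
        Finset.single_le_sum (f := fun a => i a) (fun _ _ => Nat.zero_le _)
          (Finset.mem_erase.2 ⟨fun hh => hr hh.symm, hrs⟩)
      omega
    · simpa using Finsupp.notMem_support_iff.1 hrs

lemma mem_L0_iff {v : Alg F l₁ l₂ l₃ Γ} :
    v ∈ L0 F l₁ l₂ l₃ Γ ↔ ∀ g : ↥Γ × (Fin (l₁ + l₂) →₀ ℕ), g ≠ (0, 0) → v g = 0 := by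
  classical
  constructor
  · intro hv g hg
    rw [L0, Submodule.mem_span_singleton] at hv
    obtain ⟨a, ha⟩ := hv
    rw [← ha, alg_smul_apply, mono_def, alg_single_apply, if_neg (fun hh => hg hh.symm), mul_zero]
  · intro hv
    have : v = (v (0, 0)) • mono F l₁ l₂ l₃ Γ 0 0 := by
      ext g
      rw [alg_smul_apply, mono_def, alg_single_apply]
      by_cases hg : ((0 : ↥Γ), (0 : Fin (l₁ + l₂) →₀ ℕ)) = g
      · rw [if_pos hg, mul_one, hg]
      · rw [if_neg hg, mul_zero, hv g (fun hh => hg hh.symm)]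
    rw [this]
    exact Submodule.smul_mem _ _ (Submodule.subset_span rfl)

lemma mono_not_mem_L0 {α : Γ} {i : Fin (l₁ + l₂) →₀ ℕ} (h : (α, i) ≠ ((0 : Γ), (0 : Fin (l₁ + l₂) →₀ ℕ))) :
    mono F l₁ l₂ l₃ Γ α i ∉ L0 F l₁ l₂ l₃ Γ := by
  classical
  intro hc
  have := mem_L0_iff.1 hc (α, i) h
  rw [mono_def, alg_single_apply, if_pos rfl] at this
  exact one_ne_zero this

lemma acoord_zero (p : Fin (l₁ + l₂ + l₃)) : acoord F l₁ l₂ l₃ Γ p 0 = 0 := by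
  unfold acoord
  split <;> simp

lemma fcoord_zero (p : Fin (l₁ + l₂ + l₃)) : fcoord F l₁ l₂ l₃ p 0 = 0 := by
  unfold fcoord
  split <;> simp

lemma acoord_coe (p : Fin (l₁ + l₂ + l₃)) (α : Γ) :
    acoord F l₁ l₂ l₃ Γ p α = fcoord F l₁ l₂ l₃ p (α : Fin (l₂ + l₃) → F) := rfl

lemma fcoord_at (μ : Fin (l₂ + l₃) → F) (j : Fin (l₂ + l₃)) :
    fcoord F l₁ l₂ l₃ ⟨l₁ + (j : ℕ), by have := j.isLt; omega⟩ μ = μ j := by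
  unfold fcoord
  rw [dif_pos (by show l₁ ≤ l₁ + (j : ℕ); omega)]
  congr 1
  ext
  show l₁ + (j : ℕ) - l₁ = (j : ℕ)
  omega

lemma eq_of_fcoord_eq {μ ν : Fin (l₂ + l₃) → F}
    (h : ∀ p : Fin (l₁ + l₂ + l₃), fcoord F l₁ l₂ l₃ p μ = fcoord F l₁ l₂ l₃ p ν) : μ = ν := by
  funext j
  have := h ⟨l₁ + (j : ℕ), by have := j.isLt; omega⟩
  rwa [fcoord_at, fcoord_at] at this

lemma exists_acoord_ne {α : Γ} (h : α ≠ 0) : ∃ p, acoord F l₁ l₂ l₃ Γ p α ≠ 0 := by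
  by_contra hc
  push_neg at hc
  refine h (Subtype.ext (eq_of_fcoord_eq (l₁ := l₁) (fun p => ?_)))
  rw [← acoord_coe, hc p, ← acoord_zero (Γ := Γ) p, acoord_coe]

lemma actW_wdelta (p : Fin (l₁ + l₂ + l₃)) :
    actW F l₁ l₂ l₃ Γ 0 (wdelta F l₁ l₂ l₃ Γ p) = pd F l₁ l₂ l₃ Γ p := by
  unfold actW wdelta
  rw [Finset.sum_eq_single p]
  · rw [Pi.single_eq_same, fcoord_zero, zero_smul, add_zero, LinearMap.mulLeft_one,
      LinearMap.id_comp]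
  · intro q _ hq
    rw [Pi.single_eq_of_ne hq, LinearMap.mulLeft_zero_eq_zero, LinearMap.zero_comp]
  · intro hp
    exact absurd (Finset.mem_univ p) hp

lemma Tq_mk (p : Fin (l₁ + l₂ + l₃))
    (h : L0 F l₁ l₂ l₃ Γ ≤
      (L0 F l₁ l₂ l₃ Γ).comap (actW F l₁ l₂ l₃ Γ 0 (wdelta F l₁ l₂ l₃ Γ p)))
    (u : Alg F l₁ l₂ l₃ Γ) :
    Submodule.mapQ (L0 F l₁ l₂ l₃ Γ) (L0 F l₁ l₂ l₃ Γ)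
        (actW F l₁ l₂ l₃ Γ 0 (wdelta F l₁ l₂ l₃ Γ p)) h ((L0 F l₁ l₂ l₃ Γ).mkQ u)
      = (L0 F l₁ l₂ l₃ Γ).mkQ (pd F l₁ l₂ l₃ Γ p u) := by
  rw [Submodule.mkQ_apply, Submodule.mapQ_apply, actW_wdelta, ← Submodule.mkQ_apply]

lemma Tq_pow_mk (p : Fin (l₁ + l₂ + l₃))
    (h : L0 F l₁ l₂ l₃ Γ ≤
      (L0 F l₁ l₂ l₃ Γ).comap (actW F l₁ l₂ l₃ Γ 0 (wdelta F l₁ l₂ l₃ Γ p)))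
    (c : F) (n : ℕ) (u : Alg F l₁ l₂ l₃ Γ) :
    ((Submodule.mapQ (L0 F l₁ l₂ l₃ Γ) (L0 F l₁ l₂ l₃ Γ)
          (actW F l₁ l₂ l₃ Γ 0 (wdelta F l₁ l₂ l₃ Γ p)) h
        - c • 1 : Module.End F (Alg F l₁ l₂ l₃ Γ ⧸ L0 F l₁ l₂ l₃ Γ)) ^ n)
        ((L0 F l₁ l₂ l₃ Γ).mkQ u)
      = (L0 F l₁ l₂ l₃ Γ).mkQ
        ((pdE p c ^ n) u) := by
  induction n generalizing u with
  | zero => simp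
  | succ n ih =>
      rw [pow_succ', Module.End.mul_apply]
      have e1 : ∀ v : Alg F l₁ l₂ l₃ Γ, (Submodule.mapQ (L0 F l₁ l₂ l₃ Γ) (L0 F l₁ l₂ l₃ Γ)
          (actW F l₁ l₂ l₃ Γ 0 (wdelta F l₁ l₂ l₃ Γ p)) h
            - c • 1 : Module.End F (Alg F l₁ l₂ l₃ Γ ⧸ L0 F l₁ l₂ l₃ Γ))
          ((L0 F l₁ l₂ l₃ Γ).mkQ v)
          = (L0 F l₁ l₂ l₃ Γ).mkQ (pdE p c v) := by
        intro v
        rw [LinearMap.sub_apply, LinearMap.smul_apply, Module.End.one_apply, Tq_mk,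
          pdE_apply, map_sub, map_smul]
      rw [ih, e1, pow_succ', Module.End.mul_apply]

lemma bound_pow (p : Fin (l₁ + l₂ + l₃)) (c : F) (α : Γ) (d : ℕ) (n : ℕ)
    (u : Alg F l₁ l₂ l₃ Γ) (hu : ∀ j, d < deg j → u (α, j) = 0) :
    (∀ j, d < deg j → ((pdE p c ^ n) u) (α, j) = 0)
    ∧ ∀ i, deg i = d →
      ((pdE p c ^ n) u) (α, i)
        = (acoord F l₁ l₂ l₃ Γ p α - c) ^ n * u (α, i) := by
  induction n generalizing u with
  | zero => exact ⟨by simpa using hu, by simp⟩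
  | succ n ih =>
      have step : (∀ j, d < deg j →
            (pdE p c u) (α, j) = 0)
          ∧ ∀ i, deg i = d →
            (pdE p c u) (α, i)
              = (acoord F l₁ l₂ l₃ Γ p α - c) * u (α, i) := by
        constructor
        · intro j hj
          rw [pdE_apply, alg_sub_apply, alg_smul_apply, pd_apply, hu j hj]
          have h2 : ∀ (hh : (p : ℕ) < l₁ + l₂),
              u (α, j + Finsupp.single ⟨(p : ℕ), hh⟩ 1) = 0 := by
            intro hh
            exact hu _ (by rw [deg_add, deg_single]; omega)
          by_cases hh : (p : ℕ) < l₁ + l₂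
          · rw [dif_pos hh, h2 hh]; ring
          · rw [dif_neg hh]; ring
        · intro i hi
          rw [pdE_apply, alg_sub_apply, alg_smul_apply, pd_apply]
          have h2 : ∀ (hh : (p : ℕ) < l₁ + l₂),
              u (α, i + Finsupp.single ⟨(p : ℕ), hh⟩ 1) = 0 := by
            intro hh
            exact hu _ (by rw [deg_add, deg_single]; omega)
          by_cases hh : (p : ℕ) < l₁ + l₂
          · rw [dif_pos hh, h2 hh]; ring
          · rw [dif_neg hh]; ring
      have ihv := ih (pdE p c u) step.1
      constructor
      · intro j hj
        rw [pow_succ, Module.End.mul_apply]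
        exact ihv.1 j hj
      · intro i hi
        rw [pow_succ, Module.End.mul_apply, ihv.2 i hi, step.2 i hi]
        ring

lemma exists_max_slice (u : Alg F l₁ l₂ l₃ Γ) (α : Γ) (i₀ : Fin (l₁ + l₂) →₀ ℕ)
    (h : u (α, i₀) ≠ 0) :
    ∃ i, u (α, i) ≠ 0 ∧ ∀ j, u (α, j) ≠ 0 → deg j ≤ deg i := by
  classical
  set s : Finset (Fin (l₁ + l₂) →₀ ℕ) :=
    (u.coeff.support.filter (fun g => g.1 = α)).image Prod.snd with hs
  have hmem : ∀ j, j ∈ s ↔ u (α, j) ≠ 0 := by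
    intro j
    simp only [hs, Finset.mem_image, Finset.mem_filter, Finsupp.mem_support_iff]
    constructor
    · rintro ⟨⟨β, i⟩, ⟨hne, hβ⟩, hsnd⟩
      cases hβ
      cases hsnd
      exact hne
    · intro hj
      exact ⟨(α, j), ⟨hj, rfl⟩, rfl⟩
  obtain ⟨i, his, hmax⟩ := Finset.exists_max_image s deg ⟨i₀, (hmem i₀).2 h⟩
  exact ⟨i, (hmem i).1 his, fun j hj => hmax j ((hmem j).2 hj)⟩

lemma exists_good {u : Alg F l₁ l₂ l₃ Γ} (hu : u ∉ L0 F l₁ l₂ l₃ Γ) :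
    ∃ (α : Γ) (i : Fin (l₁ + l₂) →₀ ℕ), u (α, i) ≠ 0
      ∧ ((α, i) : ↥Γ × (Fin (l₁ + l₂) →₀ ℕ)) ≠ (0, 0)
      ∧ ∀ j, u (α, j) ≠ 0 → deg j ≤ deg i := by
  classical
  by_cases hc : ∃ g : ↥Γ × (Fin (l₁ + l₂) →₀ ℕ), u g ≠ 0 ∧ g.1 ≠ 0
  · obtain ⟨⟨α, i₀⟩, h1, h2⟩ := hc
    obtain ⟨i, hne, hmax⟩ := exists_max_slice u α i₀ h1
    exact ⟨α, i, hne, fun hh => h2 (congrArg Prod.fst hh), hmax⟩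
  · push_neg at hc
    have hex : ∃ g : ↥Γ × (Fin (l₁ + l₂) →₀ ℕ), g ≠ (0, 0) ∧ u g ≠ 0 := by
      by_contra hcc
      push_neg at hcc
      exact hu (mem_L0_iff.2 (fun g hg => hcc g hg))
    obtain ⟨⟨α, i₀⟩, hg0, hg⟩ := hex
    have hα : α = 0 := hc _ hg
    subst hα
    have hi₀ : i₀ ≠ 0 := fun hh => hg0 (by rw [hh])
    obtain ⟨i, hne, hmax⟩ := exists_max_slice u 0 i₀ hg
    have hdi : 1 ≤ deg i := by
      have h1 : deg i₀ ≤ deg i := hmax i₀ hg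
      have : deg i₀ ≠ 0 := fun hh => hi₀ (deg_eq_zero hh)
      omega
    refine ⟨0, i, hne, fun hh => ?_, hmax⟩
    have : i = 0 := congrArg Prod.snd hh
    rw [this] at hdi
    simp [deg] at hdi

lemma eq_of_acoord {α β : Γ} (h : ∀ p, acoord F l₁ l₂ l₃ Γ p α = acoord F l₁ l₂ l₃ Γ p β) :
    α = β :=
  Subtype.ext (eq_of_fcoord_eq (l₁ := l₁) (fun p => by rw [← acoord_coe, ← acoord_coe, h p]))

lemma single_eq_smul_mono (α : Γ) (i : Fin (l₁ + l₂) →₀ ℕ) (c : F) :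
    (AddMonoidAlgebra.single (α, i) c : Alg F l₁ l₂ l₃ Γ) = c • mono F l₁ l₂ l₃ Γ α i := by
  classical
  ext g
  rw [alg_smul_apply, mono_def, alg_single_apply, alg_single_apply]
  by_cases h : ((α, i) : ↥Γ × (Fin (l₁ + l₂) →₀ ℕ)) = g
  · rw [if_pos h, if_pos h, mul_one]
  · rw [if_neg h, if_neg h, mul_zero]

lemma u_eq_sum (u : Alg F l₁ l₂ l₃ Γ) :
    u = ∑ g ∈ u.coeff.support, AddMonoidAlgebra.single g (u g) := by
  conv_lhs => rw [← AddMonoidAlgebra.ofCoeff_coeff u, ← Finsupp.sum_single u.coeff]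
  rw [Finsupp.sum, AddMonoidAlgebra.ofCoeff_sum]
  rfl

lemma icoord_zero (p : Fin (l₁ + l₂ + l₃)) : icoord l₁ l₂ l₃ p (0 : Fin (l₁ + l₂) →₀ ℕ) = 0 := by
  unfold icoord
  split <;> simp

lemma kernel_support {u : Alg F l₁ l₂ l₃ Γ}
    (hc : ∀ p, pd F l₁ l₂ l₃ Γ p u ∈ L0 F l₁ l₂ l₃ Γ) :
    ∀ (α : Γ) (i : Fin (l₁ + l₂) →₀ ℕ), u (α, i) ≠ 0 → α = 0 ∧ deg i ≤ 1 := by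
  classical
  have hzero : ∀ (α : Γ), α ≠ 0 → ∀ i, u (α, i) = 0 := by
    intro α hα i
    by_contra hne
    obtain ⟨im, him, hmax⟩ := exists_max_slice u α i hne
    obtain ⟨p, hp⟩ := exists_acoord_ne hα
    have hv := mem_L0_iff.1 (hc p) (α, im) (by intro hh; exact hα (congrArg Prod.fst hh))
    rw [pd_apply] at hv
    have h2 : ∀ hh : (p : ℕ) < l₁ + l₂, u (α, im + Finsupp.single ⟨(p : ℕ), hh⟩ 1) = 0 := by
      intro hh
      by_contra hcc
      have := hmax _ hcc
      rw [deg_add, deg_single] at this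
      omega
    have hv2 : acoord F l₁ l₂ l₃ Γ p α * u (α, im) = 0 := by
      by_cases hh : (p : ℕ) < l₁ + l₂
      · rw [dif_pos hh, h2 hh, mul_zero, add_zero] at hv; exact hv
      · rw [dif_neg hh, add_zero] at hv; exact hv
    rcases mul_eq_zero.1 hv2 with h | h
    · exact hp h
    · exact him h
  intro α i hne
  have hα : α = 0 := by
    by_contra hαne
    exact hne (hzero α hαne i)
  subst hα
  refine ⟨rfl, ?_⟩
  by_contra hdeg
  push_neg at hdeg
  have hine : i ≠ 0 := by
    intro hh
    rw [hh] at hdeg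
    simp [deg] at hdeg
  obtain ⟨P, hP⟩ := deg_pos_exists hine
  set j := i - Finsupp.single P 1 with hjdef
  have hij : i = j + Finsupp.single P 1 := (tsub_single_eq_iff hP).1 rfl
  have hdj : deg i = deg j + 1 := by rw [hij, deg_add, deg_single]
  have hjne : j ≠ 0 := by
    intro hh
    rw [hh, deg_zero] at hdj
    omega
  set p : Fin (l₁ + l₂ + l₃) := ⟨(P : ℕ), by have := P.isLt; omega⟩ with hpdef
  have hplt : (p : ℕ) < l₁ + l₂ := P.isLt
  have hv := mem_L0_iff.1 (hc p) (0, j) (by intro hh; exact hjne (congrArg Prod.snd hh))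
  rw [pd_apply, acoord_zero, zero_mul, zero_add, dif_pos hplt] at hv
  have hPP : (⟨(p : ℕ), hplt⟩ : Fin (l₁ + l₂)) = P := rfl
  rw [hPP, ← hij] at hv
  rcases mul_eq_zero.1 hv with h | h
  · have : ((j P + 1 : ℕ) : F) ≠ 0 := Nat.cast_ne_zero.2 (by omega)
    exact this h
  · exact hne h

lemma eigen_support {β : Γ} (hβ : β ≠ 0) {u : Alg F l₁ l₂ l₃ Γ}
    (hc : ∀ p, pd F l₁ l₂ l₃ Γ p u - acoord F l₁ l₂ l₃ Γ p β • u ∈ L0 F l₁ l₂ l₃ Γ) :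
    ∀ g : ↥Γ × (Fin (l₁ + l₂) →₀ ℕ), u g ≠ 0 → g = (β, 0) ∨ g = (0, 0) := by
  classical
  have hstep1 : ∀ (α : Γ) i, α ≠ 0 → u (α, i) ≠ 0 → α = β := by
    intro α i hα hne
    obtain ⟨im, him, hmax⟩ := exists_max_slice u α i hne
    refine eq_of_acoord (l₁ := l₁) (fun p => ?_)
    have hv := mem_L0_iff.1 (hc p) (α, im) (by intro hh; exact hα (congrArg Prod.fst hh))
    rw [alg_sub_apply, alg_smul_apply, pd_apply] at hv
    have h2 : ∀ hh : (p : ℕ) < l₁ + l₂, u (α, im + Finsupp.single ⟨(p : ℕ), hh⟩ 1) = 0 := by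
      intro hh
      by_contra hcc
      have := hmax _ hcc
      rw [deg_add, deg_single] at this
      omega
    have hv2 : (acoord F l₁ l₂ l₃ Γ p α - acoord F l₁ l₂ l₃ Γ p β) * u (α, im) = 0 := by
      by_cases hh : (p : ℕ) < l₁ + l₂
      · rw [dif_pos hh, h2 hh] at hv; linear_combination hv
      · rw [dif_neg hh] at hv; linear_combination hv
    rcases mul_eq_zero.1 hv2 with h | h
    · exact sub_eq_zero.1 h
    · exact absurd h him
  have hstep2 : ∀ i, i ≠ 0 → u (β, i) = 0 := by
    intro i hi
    by_contra hne
    obtain ⟨P, hP⟩ := deg_pos_exists hi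
    set j := i - Finsupp.single P 1 with hjdef
    have hij : i = j + Finsupp.single P 1 := (tsub_single_eq_iff hP).1 rfl
    set p : Fin (l₁ + l₂ + l₃) := ⟨(P : ℕ), by have := P.isLt; omega⟩ with hpdef
    have hplt : (p : ℕ) < l₁ + l₂ := P.isLt
    have hv := mem_L0_iff.1 (hc p) (β, j) (by intro hh; exact hβ (congrArg Prod.fst hh))
    rw [alg_sub_apply, alg_smul_apply, pd_apply, dif_pos hplt] at hv
    have hPP : (⟨(p : ℕ), hplt⟩ : Fin (l₁ + l₂)) = P := rfl
    rw [hPP, ← hij] at hv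
    have hv2 : ((j P + 1 : ℕ) : F) * u (β, i) = 0 := by linear_combination hv
    rcases mul_eq_zero.1 hv2 with h | h
    · exact Nat.cast_ne_zero.2 (by omega) h
    · exact hne h
  have hstep3 : ∀ i, i ≠ 0 → u ((0 : Γ), i) = 0 := by
    intro i hi
    by_contra hne
    obtain ⟨im, him, hmax⟩ := exists_max_slice u 0 i hne
    have himne : im ≠ 0 := by
      intro hh
      have h1 := hmax i hne
      have h2 : deg i ≠ 0 := fun hh2 => hi (deg_eq_zero hh2)
      rw [hh, deg_zero] at h1
      omega
    obtain ⟨p, hp⟩ := exists_acoord_ne hβ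
    have hv := mem_L0_iff.1 (hc p) (0, im) (by intro hh; exact himne (congrArg Prod.snd hh))
    rw [alg_sub_apply, alg_smul_apply, pd_apply, acoord_zero] at hv
    have h2 : ∀ hh : (p : ℕ) < l₁ + l₂, u ((0 : Γ), im + Finsupp.single ⟨(p : ℕ), hh⟩ 1) = 0 := by
      intro hh
      by_contra hcc
      have := hmax _ hcc
      rw [deg_add, deg_single] at this
      omega
    have hv2 : acoord F l₁ l₂ l₃ Γ p β * u ((0 : Γ), im) = 0 := by
      by_cases hh : (p : ℕ) < l₁ + l₂
      · rw [dif_pos hh, h2 hh] at hv; linear_combination -hv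
      · rw [dif_neg hh] at hv; linear_combination -hv
    rcases mul_eq_zero.1 hv2 with h | h
    · exact hp h
    · exact him h
  rintro ⟨α, i⟩ hne
  by_cases hα : α = 0
  · subst hα
    by_cases hi : i = 0
    · subst hi; exact Or.inr rfl
    · exact absurd (hstep3 i hi) hne
  · have hαβ : α = β := hstep1 α i hα hne
    subst hαβ
    by_cases hi : i = 0
    · subst hi; exact Or.inl rfl
    · exact absurd (hstep2 i hi) hne

lemma gen_weight_mem {β : Fin (l₂ + l₃) → F} {u : Alg F l₁ l₂ l₃ Γ}
    (hu : u ∉ L0 F l₁ l₂ l₃ Γ)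
    (hgen : ∀ p, ∃ n, ((pdE p (fcoord F l₁ l₂ l₃ p β) : Module.End F (Alg F l₁ l₂ l₃ Γ)) ^ n) u
      ∈ L0 F l₁ l₂ l₃ Γ) : β ∈ Γ := by
  obtain ⟨α, i, hne, hg0, hmax⟩ := exists_good hu
  have hco : ∀ p, acoord F l₁ l₂ l₃ Γ p α = fcoord F l₁ l₂ l₃ p β := by
    intro p
    obtain ⟨n, hn⟩ := hgen p
    have hhyp : ∀ j, deg i < deg j → u (α, j) = 0 := by
      intro j hj
      by_contra hcc
      have := hmax j hcc
      omega
    have hb := (bound_pow p (fcoord F l₁ l₂ l₃ p β) α (deg i) n u hhyp).2 i rfl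
    have hv := mem_L0_iff.1 hn (α, i) hg0
    rw [hb] at hv
    rcases mul_eq_zero.1 hv with h | h
    · exact sub_eq_zero.1 ((pow_eq_zero_iff' (M₀ := F)).1 h).1
    · exact absurd h hne
  have : β = (α : Fin (l₂ + l₃) → F) :=
    eq_of_fcoord_eq (l₁ := l₁) (fun p => by rw [← hco p, acoord_coe])
  rw [this]
  exact α.2

lemma pd_mono_single_mem (p : Fin (l₁ + l₂ + l₃)) (q : Fin (l₁ + l₂)) :
    pd F l₁ l₂ l₃ Γ p (mono F l₁ l₂ l₃ Γ 0 (Finsupp.single q 1)) ∈ L0 F l₁ l₂ l₃ Γ := by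
  classical
  rw [mem_L0_iff]
  rintro ⟨α, j⟩ hg
  rw [pd_apply]
  have hmval : ∀ (α' : Γ) (j' : Fin (l₁ + l₂) →₀ ℕ),
      (mono F l₁ l₂ l₃ Γ 0 (Finsupp.single q 1)) (α', j')
        = if (((0 : Γ), Finsupp.single q 1) : ↥Γ × (Fin (l₁ + l₂) →₀ ℕ)) = (α', j')
          then (1 : F) else 0 := by
    intro α' j'
    rw [mono_def, alg_single_apply]
  have hterm1 : acoord F l₁ l₂ l₃ Γ p α *
      (mono F l₁ l₂ l₃ Γ 0 (Finsupp.single q 1)) (α, j) = 0 := by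
    rw [hmval]
    by_cases e1 : (((0 : Γ), Finsupp.single q 1) : ↥Γ × (Fin (l₁ + l₂) →₀ ℕ)) = (α, j)
    · have : α = 0 := (congrArg Prod.fst e1).symm
      rw [this, acoord_zero, zero_mul]
    · rw [if_neg e1, mul_zero]
  by_cases hh : (p : ℕ) < l₁ + l₂
  · rw [dif_pos hh, hterm1, zero_add, hmval]
    have e2 : ¬ (((0 : Γ), Finsupp.single q 1) : ↥Γ × (Fin (l₁ + l₂) →₀ ℕ))
        = (α, j + Finsupp.single ⟨(p : ℕ), hh⟩ 1) := by
      intro e2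
      have hα : (0 : Γ) = α := congrArg Prod.fst e2
      have hj : Finsupp.single q 1 = j + Finsupp.single ⟨(p : ℕ), hh⟩ 1 := congrArg Prod.snd e2
      have hd : (1 : ℕ) = deg j + 1 := by
        have := congrArg deg hj
        rwa [deg_single, deg_add, deg_single] at this
      have hj0 : j = 0 := deg_eq_zero (by omega)
      exact hg (by rw [← hα, hj0])
    rw [if_neg e2, mul_zero]
  · rw [dif_neg hh, hterm1, add_zero]

lemma pd_mono_beta (p : Fin (l₁ + l₂ + l₃)) (β : Γ) :
    pd F l₁ l₂ l₃ Γ p (mono F l₁ l₂ l₃ Γ β 0)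
      - acoord F l₁ l₂ l₃ Γ p β • mono F l₁ l₂ l₃ Γ β 0 ∈ L0 F l₁ l₂ l₃ Γ := by
  have : pd F l₁ l₂ l₃ Γ p (mono F l₁ l₂ l₃ Γ β 0)
      = acoord F l₁ l₂ l₃ Γ p β • mono F l₁ l₂ l₃ Γ β 0 := by
    rw [mono_def, pd_single, icoord_zero, one_smul, Nat.cast_zero, zero_smul, add_zero, mono_def]
  rw [this, sub_self]
  exact Submodule.zero_mem _

lemma mkQ_indep :
    LinearIndependent F (fun q : Fin (l₁ + l₂) =>
      (L0 F l₁ l₂ l₃ Γ).mkQ (mono F l₁ l₂ l₃ Γ 0 (Finsupp.single q 1))) := by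
  classical
  rw [Fintype.linearIndependent_iff]
  intro g hg q0
  have hsum : (L0 F l₁ l₂ l₃ Γ).mkQ (∑ q, g q • mono F l₁ l₂ l₃ Γ 0 (Finsupp.single q 1)) = 0 := by
    rw [map_sum]
    simp only [map_smul]
    exact hg
  rw [Submodule.mkQ_apply, Submodule.Quotient.mk_eq_zero] at hsum
  have hv := mem_L0_iff.1 hsum (0, Finsupp.single q0 1)
    (by
      intro hh
      exact one_ne_zero (Finsupp.single_eq_zero.1 (congrArg Prod.snd hh)))
  rw [AddMonoidAlgebra.coeff_sum, Finsupp.finset_sum_apply] at hv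
  rw [Finset.sum_eq_single q0] at hv
  · rw [alg_smul_apply, mono_def, alg_single_apply, if_pos rfl, mul_one] at hv
    exact hv
  · intro q _ hq
    rw [alg_smul_apply, mono_def, alg_single_apply, if_neg, mul_zero]
    intro hh
    exact hq (Finsupp.single_left_injective one_ne_zero (congrArg Prod.snd hh))
  · intro hq
    exact absurd (Finset.mem_univ q0) hq

end Lemmas

/-- For the simple quotient `V = A₀ / F·v_{0,0}`: the set of generalized weights of `V`
is exactly `Γ`; the weight space `V_0^{(0)}` has dimension `l₁+l₂`, spanned by the images
of the `v_{0,1_[p]}`; and `dim V_β^{(0)} = 1` for every `β ∈ Γ∖{0}`. -/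
theorem stmt18 [IsAlgClosed F] [CharZero F]
    (h12 : 3 ≤ l₁ + l₂) (h23 : 3 ≤ l₂ + l₃) (hΓ : Nondeg F l₂ l₃ Γ)
    (hmap : ∀ p : Fin (l₁ + l₂ + l₃),
      L0 F l₁ l₂ l₃ Γ ≤
        (L0 F l₁ l₂ l₃ Γ).comap (actW F l₁ l₂ l₃ Γ 0 (wdelta F l₁ l₂ l₃ Γ p))) :
    (∀ β : Fin (l₂ + l₃) → F,
        (∃ w : Alg F l₁ l₂ l₃ Γ ⧸ L0 F l₁ l₂ l₃ Γ, w ≠ 0 ∧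
          ∀ p : Fin (l₁ + l₂ + l₃), ∃ n : ℕ,
            ((Submodule.mapQ (L0 F l₁ l₂ l₃ Γ) (L0 F l₁ l₂ l₃ Γ)
                  (actW F l₁ l₂ l₃ Γ 0 (wdelta F l₁ l₂ l₃ Γ p)) (hmap p)
                - fcoord F l₁ l₂ l₃ p β • 1 :
                Module.End F (Alg F l₁ l₂ l₃ Γ ⧸ L0 F l₁ l₂ l₃ Γ)) ^ n) w = 0) ↔
        β ∈ Γ) ∧
    Submodule.span F
        {w : Alg F l₁ l₂ l₃ Γ ⧸ L0 F l₁ l₂ l₃ Γ | ∀ p : Fin (l₁ + l₂ + l₃),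
          Submodule.mapQ (L0 F l₁ l₂ l₃ Γ) (L0 F l₁ l₂ l₃ Γ)
              (actW F l₁ l₂ l₃ Γ 0 (wdelta F l₁ l₂ l₃ Γ p)) (hmap p) w = 0} =
      Submodule.span F
        (Set.range fun p : Fin (l₁ + l₂) =>
          (L0 F l₁ l₂ l₃ Γ).mkQ (mono F l₁ l₂ l₃ Γ 0 (Finsupp.single p 1))) ∧
    Module.rank F
        ↥(Submodule.span F
          {w : Alg F l₁ l₂ l₃ Γ ⧸ L0 F l₁ l₂ l₃ Γ | ∀ p : Fin (l₁ + l₂ + l₃),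
            Submodule.mapQ (L0 F l₁ l₂ l₃ Γ) (L0 F l₁ l₂ l₃ Γ)
                (actW F l₁ l₂ l₃ Γ 0 (wdelta F l₁ l₂ l₃ Γ p)) (hmap p) w = 0}) =
      (l₁ + l₂ : Cardinal) ∧
    ∀ β : Γ, β ≠ 0 →
      Module.rank F
          ↥(Submodule.span F
            {w : Alg F l₁ l₂ l₃ Γ ⧸ L0 F l₁ l₂ l₃ Γ | ∀ p : Fin (l₁ + l₂ + l₃),
              Submodule.mapQ (L0 F l₁ l₂ l₃ Γ) (L0 F l₁ l₂ l₃ Γ)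
                  (actW F l₁ l₂ l₃ Γ 0 (wdelta F l₁ l₂ l₃ Γ p)) (hmap p) w =
                acoord F l₁ l₂ l₃ Γ p β • w}) = 1 := by
  classical
  have hspan2 : Submodule.span F
        {w : Alg F l₁ l₂ l₃ Γ ⧸ L0 F l₁ l₂ l₃ Γ | ∀ p : Fin (l₁ + l₂ + l₃),
          Submodule.mapQ (L0 F l₁ l₂ l₃ Γ) (L0 F l₁ l₂ l₃ Γ)
              (actW F l₁ l₂ l₃ Γ 0 (wdelta F l₁ l₂ l₃ Γ p)) (hmap p) w = 0} =
      Submodule.span F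
        (Set.range fun p : Fin (l₁ + l₂) =>
          (L0 F l₁ l₂ l₃ Γ).mkQ (mono F l₁ l₂ l₃ Γ 0 (Finsupp.single p 1))) := by
    apply le_antisymm
    · rw [Submodule.span_le]
      rintro w hw
      obtain ⟨u, rfl⟩ := Submodule.mkQ_surjective _ w
      have hker : ∀ p, pd F l₁ l₂ l₃ Γ p u ∈ L0 F l₁ l₂ l₃ Γ := by
        intro p
        have h1 := hw p
        rwa [Tq_mk, Submodule.mkQ_apply, Submodule.Quotient.mk_eq_zero] at h1
      have hsupp := kernel_support hker
      rw [SetLike.mem_coe]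
      have hdec : (L0 F l₁ l₂ l₃ Γ).mkQ u
          = ∑ g ∈ u.coeff.support, (L0 F l₁ l₂ l₃ Γ).mkQ (AddMonoidAlgebra.single g (u g)) := by
        conv_lhs => rw [u_eq_sum u]
        rw [map_sum]
      rw [hdec]
      refine Submodule.sum_mem _ (fun g hg => ?_)
      obtain ⟨α, i⟩ := g
      have hune := Finsupp.mem_support_iff.1 hg
      obtain ⟨hα, hdeg⟩ := hsupp α i hune
      subst hα
      by_cases h0 : deg i = 0
      · have hi0 : i = 0 := deg_eq_zero h0
        subst hi0
        rw [single_eq_smul_mono, map_smul]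
        have hz : (L0 F l₁ l₂ l₃ Γ).mkQ (mono F l₁ l₂ l₃ Γ 0 0) = 0 := by
          rw [Submodule.mkQ_apply, Submodule.Quotient.mk_eq_zero]
          exact Submodule.subset_span rfl
        rw [hz, smul_zero]
        exact Submodule.zero_mem _
      · have h1 : deg i = 1 := by omega
        obtain ⟨q, rfl⟩ := deg_eq_one h1
        rw [single_eq_smul_mono, map_smul]
        exact Submodule.smul_mem _ _ (Submodule.subset_span ⟨q, rfl⟩)
    · rw [Submodule.span_le]
      rintro w ⟨q, rfl⟩
      apply Submodule.subset_span
      intro p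
      rw [Tq_mk, Submodule.mkQ_apply, Submodule.Quotient.mk_eq_zero]
      exact pd_mono_single_mem p q
  refine ⟨?_, hspan2, ?_, ?_⟩
  · intro β
    constructor
    · rintro ⟨w, hw0, hwn⟩
      obtain ⟨u, rfl⟩ := Submodule.mkQ_surjective _ w
      have hu : u ∉ L0 F l₁ l₂ l₃ Γ := by
        intro hc
        exact hw0 (by rwa [Submodule.mkQ_apply, Submodule.Quotient.mk_eq_zero])
      refine gen_weight_mem hu (fun p => ?_)
      obtain ⟨n, hn⟩ := hwn p
      refine ⟨n, ?_⟩
      rw [Tq_pow_mk, Submodule.mkQ_apply, Submodule.Quotient.mk_eq_zero] at hn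
      exact hn
    · intro hβ
      by_cases hb0 : β = 0
      · subst hb0
        refine ⟨(L0 F l₁ l₂ l₃ Γ).mkQ
            (mono F l₁ l₂ l₃ Γ 0 (Finsupp.single ⟨0, by omega⟩ 1)), ?_, fun p => ⟨1, ?_⟩⟩
        · intro hc
          rw [Submodule.mkQ_apply, Submodule.Quotient.mk_eq_zero] at hc
          exact mono_not_mem_L0
            (by
              intro hh
              exact one_ne_zero (Finsupp.single_eq_zero.1 (congrArg Prod.snd hh))) hc
        · rw [Tq_pow_mk, Submodule.mkQ_apply, Submodule.Quotient.mk_eq_zero, pow_one,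
            pdE_apply, fcoord_zero, zero_smul, sub_zero]
          exact pd_mono_single_mem p _
      · have hβΓ : β ∈ Γ := hβ
        set b : Γ := ⟨β, hβΓ⟩ with hbdef
        have hbne : b ≠ 0 := fun hh => hb0 (congrArg Subtype.val hh)
        refine ⟨(L0 F l₁ l₂ l₃ Γ).mkQ (mono F l₁ l₂ l₃ Γ b 0), ?_, fun p => ⟨1, ?_⟩⟩
        · intro hc
          rw [Submodule.mkQ_apply, Submodule.Quotient.mk_eq_zero] at hc
          exact mono_not_mem_L0 (fun hh => hbne (congrArg Prod.fst hh)) hc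
        · rw [Tq_pow_mk, Submodule.mkQ_apply, Submodule.Quotient.mk_eq_zero, pow_one,
            pdE_apply]
          have he : fcoord F l₁ l₂ l₃ p β = acoord F l₁ l₂ l₃ Γ p b := rfl
          rw [he]
          exact pd_mono_beta p b
  · rw [hspan2, rank_span mkQ_indep, Cardinal.mk_range_eq _ mkQ_indep.injective,
      Cardinal.mk_fin, Nat.cast_add]
  · intro β hβ
    have hxne : (L0 F l₁ l₂ l₃ Γ).mkQ (mono F l₁ l₂ l₃ Γ β 0) ≠ 0 := by
      intro hc
      rw [Submodule.mkQ_apply, Submodule.Quotient.mk_eq_zero] at hc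
      exact mono_not_mem_L0 (fun hh => hβ (congrArg Prod.fst hh)) hc
    have hspan : Submodule.span F
          {w : Alg F l₁ l₂ l₃ Γ ⧸ L0 F l₁ l₂ l₃ Γ | ∀ p : Fin (l₁ + l₂ + l₃),
            Submodule.mapQ (L0 F l₁ l₂ l₃ Γ) (L0 F l₁ l₂ l₃ Γ)
                (actW F l₁ l₂ l₃ Γ 0 (wdelta F l₁ l₂ l₃ Γ p)) (hmap p) w =
              acoord F l₁ l₂ l₃ Γ p β • w}
        = Submodule.span F {(L0 F l₁ l₂ l₃ Γ).mkQ (mono F l₁ l₂ l₃ Γ β 0)} := by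
      apply le_antisymm
      · rw [Submodule.span_le]
        rintro w hw
        obtain ⟨u, rfl⟩ := Submodule.mkQ_surjective _ w
        have hc : ∀ p, pd F l₁ l₂ l₃ Γ p u - acoord F l₁ l₂ l₃ Γ p β • u ∈ L0 F l₁ l₂ l₃ Γ := by
          intro p
          have h1 := hw p
          rw [Tq_mk, ← map_smul, Submodule.mkQ_apply, Submodule.mkQ_apply,
            Submodule.Quotient.eq] at h1
          exact h1
        have hsupp := eigen_support hβ hc
        rw [SetLike.mem_coe]
        have hdec : (L0 F l₁ l₂ l₃ Γ).mkQ u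
            = ∑ g ∈ u.coeff.support, (L0 F l₁ l₂ l₃ Γ).mkQ (AddMonoidAlgebra.single g (u g)) := by
          conv_lhs => rw [u_eq_sum u]
          rw [map_sum]
        rw [hdec]
        refine Submodule.sum_mem _ (fun g hg => ?_)
        rcases hsupp g (Finsupp.mem_support_iff.1 hg) with h | h
        · subst h
          rw [single_eq_smul_mono, map_smul]
          exact Submodule.smul_mem _ _ (Submodule.subset_span rfl)
        · subst h
          rw [single_eq_smul_mono, map_smul]
          have hz : (L0 F l₁ l₂ l₃ Γ).mkQ (mono F l₁ l₂ l₃ Γ 0 0) = 0 := by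
            rw [Submodule.mkQ_apply, Submodule.Quotient.mk_eq_zero]
            exact Submodule.subset_span rfl
          rw [hz, smul_zero]
          exact Submodule.zero_mem _
      · rw [Submodule.span_le, Set.singleton_subset_iff, SetLike.mem_coe]
        apply Submodule.subset_span
        intro p
        rw [Tq_mk, ← map_smul, Submodule.mkQ_apply, Submodule.mkQ_apply, Submodule.Quotient.eq]
        exact pd_mono_beta p β
    rw [hspan, ← Module.finrank_eq_rank, finrank_span_singleton hxne, Nat.cast_one]


end SDF
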